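/- Let μᵢₘ be nonzero complex numbers (1 ≤ i ≤ p, 1 ≤ m ≤ n) with the p vectors (ln|μᵢ₁|,…,ln|μᵢₙ|) ∈ ℝⁿ linearly independent. Fix m and suppose every ℓ ∈ Ω = {ℓ ∈ ℕⁿ : ∏ₖ μᵢₖ^{ℓₖ} = 1 ∀i} has ℓₘ = 0 and the ℝ-span of Ω has dimension n − p. Then there is no γ ∈ ℕⁿ with γₘ = 0 and μᵢₘ = ∏ₖ μᵢₖ^{γₖ} for all i = 1,…,p. -/

import Mathlib

open Complex Finset

/-- Division lemma, projectively hyperbolic case: if every `ℓ ∈ Ω` has `ℓₘ = 0`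
and the real span of `Ω` has dimension `n − p`, and the log-modulus vectors are
independent, then there is no resonant multi-index `γ ∈ ℕⁿ` with `γₘ = 0` and
`μᵢₘ = ∏ₖ μᵢₖ^{γₖ}` for all `i`. -/
theorem stmt_7 (n p : ℕ) (μ : Fin p → Fin n → ℂ) (hμ : ∀ i k, μ i k ≠ 0)
    (hindep : LinearIndependent ℝ
      (fun i : Fin p => fun k : Fin n => Real.log ‖μ i k‖))
    (m : Fin n)
    (hΩm : ∀ ℓ : Fin n → ℕ, (∀ i, ∏ k, μ i k ^ ℓ k = 1) → ℓ m = 0)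
    (hdim : Module.finrank ℝ (Submodule.span ℝ
      {v : Fin n → ℝ | ∃ ℓ : Fin n → ℕ, (∀ k, v k = (ℓ k : ℝ)) ∧
        ∀ i, ∏ k, μ i k ^ ℓ k = 1}) = n - p) :
    ¬ ∃ γ : Fin n → ℕ, γ m = 0 ∧ ∀ i, μ i m = ∏ k, μ i k ^ γ k := by
  rintro ⟨γ, hγm, hγ⟩
  -- the matrix of log moduli
  set A : Matrix (Fin p) (Fin n) ℝ :=
    fun i k => Real.log ‖μ i k‖ with hA
  -- log of a multiplicative relation gives a linear relation
  have key : ∀ (i : Fin p) (ℓ : Fin n → ℕ), (∏ k, μ i k ^ ℓ k = 1) →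
      ∑ k, (ℓ k : ℝ) * A i k = 0 := by
    intro i ℓ hℓ
    have habs : ∏ k, ‖μ i k‖ ^ ℓ k = 1 := by
      have := congrArg (fun z : ℂ => ‖z‖) hℓ
      simpa [norm_prod, norm_pow] using this
    have := congrArg Real.log habs
    rw [Real.log_prod (fun k _ => pow_ne_zero _ (norm_ne_zero_iff.mpr (hμ i k)))]
      at this
    simp only [Real.log_pow, Real.log_one] at this
    simpa [hA] using this
  -- log of the resonance relation
  have keyγ : ∀ i : Fin p, ∑ k, (γ k : ℝ) * A i k = A i m := by
    intro i
    have habs : ‖μ i m‖ = ∏ k, ‖μ i k‖ ^ γ k := by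
      have := congrArg (fun z : ℂ => ‖z‖) (hγ i)
      simpa [norm_prod, norm_pow] using this
    have := congrArg Real.log habs
    rw [Real.log_prod (fun k _ => pow_ne_zero _ (norm_ne_zero_iff.mpr (hμ i k)))]
      at this
    simp only [Real.log_pow] at this
    simp [hA, ← this]
  -- the kernel of v ↦ (∑ₖ vₖ ln|μᵢₖ|)ᵢ
  set L : (Fin n → ℝ) →ₗ[ℝ] (Fin p → ℝ) := A.mulVecLin with hL
  have hrankA : A.rank = p := by
    have := hindep.rank_matrix (M := A)
    simpa using this
  have hrangeL : Module.finrank ℝ (LinearMap.range L) = p := hrankA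
  have hkerL : Module.finrank ℝ (LinearMap.ker L) = n - p := by
    have h1 := LinearMap.finrank_range_add_finrank_ker L
    rw [hrangeL] at h1
    have h2 : Module.finrank ℝ (Fin n → ℝ) = n := by
      simp [Module.finrank_pi]
    rw [h2] at h1
    exact Nat.eq_sub_of_add_eq' h1
  -- the span of Ω
  set S : Submodule ℝ (Fin n → ℝ) := Submodule.span ℝ
      {v : Fin n → ℝ | ∃ ℓ : Fin n → ℕ, (∀ k, v k = (ℓ k : ℝ)) ∧
        ∀ i, ∏ k, μ i k ^ ℓ k = 1} with hS
  have hSle : S ≤ LinearMap.ker L := by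
    rw [hS, Submodule.span_le]
    intro v hv
    obtain ⟨ℓ, hvℓ, hℓ⟩ := hv
    simp only [SetLike.mem_coe, LinearMap.mem_ker]
    funext i
    have := key i ℓ (hℓ i)
    simp only [hL, Matrix.mulVecLin_apply, Matrix.mulVec, dotProduct]
    simp only [Pi.zero_apply]
    rw [← this]
    exact Finset.sum_congr rfl fun k _ => by rw [hvℓ k, mul_comm]
  have hSeq : S = LinearMap.ker L :=
    Submodule.eq_of_le_of_finrank_eq hSle (by rw [hdim, hkerL])
  -- every element of S has m-th coordinate zero
  have hSm : ∀ v ∈ S, v m = 0 := by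
    intro v hv
    have : S ≤ LinearMap.ker (LinearMap.proj m : (Fin n → ℝ) →ₗ[ℝ] ℝ) := by
      rw [hS, Submodule.span_le]
      intro w hw'
      obtain ⟨ℓ, hwℓ, hℓ⟩ := hw'
      simp only [SetLike.mem_coe, LinearMap.mem_ker, LinearMap.proj_apply]
      rw [hwℓ m, hΩm ℓ hℓ, Nat.cast_zero]
    simpa using this hv
  -- the vector w with wₘ = -1
  set w : Fin n → ℝ := fun k => if k = m then -1 else (γ k : ℝ) with hw
  have hwker : w ∈ LinearMap.ker L := by
    simp only [LinearMap.mem_ker]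
    funext i
    simp only [hL, Matrix.mulVecLin_apply, Matrix.mulVec, dotProduct,
      Pi.zero_apply]
    have e1 : ∑ k, A i k * w k
        = A i m * w m + ∑ k ∈ Finset.univ.erase m, A i k * w k :=
      (Finset.add_sum_erase _ _ (Finset.mem_univ m)).symm
    have e2 : ∑ k, (γ k : ℝ) * A i k
        = (γ m : ℝ) * A i m + ∑ k ∈ Finset.univ.erase m, (γ k : ℝ) * A i k :=
      (Finset.add_sum_erase _ _ (Finset.mem_univ m)).symm
    have e3 : ∑ k ∈ Finset.univ.erase m, A i k * w k
        = ∑ k ∈ Finset.univ.erase m, (γ k : ℝ) * A i k := by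
      refine Finset.sum_congr rfl fun k hk => ?_
      have hk' : k ≠ m := Finset.ne_of_mem_erase hk
      simp [hw, hk', mul_comm]
    have hwm : w m = -1 := by simp [hw]
    have := keyγ i
    rw [e2, hγm] at this
    rw [e1, e3, hwm]
    push_cast at this ⊢
    linarith
  rw [← hSeq] at hwker
  have := hSm w hwker
  simp [hw] at this
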